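/- There exists a constant c > 0 such that the following holds. Let 𝔥 be a dimension function, let δ > 0, let I ⊆ ℝ be an interval, let E ⊆ I, and let η > 0 be such that 𝔥⁻¹(η/8) < δ and H^𝔥_δ(E) ≥ η, where 𝔥⁻¹(y) = inf{ x > 0 : 𝔥(x) ≥ y }. Then there exist two subintervals I⁻ and I⁺ of I such that the distance between I⁻ and I⁺ is at least 𝔥⁻¹(η/8), and H^𝔥_δ(I⁻ ∩ E) ≥ c·η and H^𝔥_δ(I⁺ ∩ E) ≥ c·η. -/

import Mathlib

open MeasureTheory Set

/-- A dimension function: nondecreasing, continuous on `[0,∞)`, `h 0 = 0`, nonnegative. -/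
def IsDimFun (h : ℝ → ℝ) : Prop :=
  MonotoneOn h (Ici 0) ∧ ContinuousOn h (Ici 0) ∧ h 0 = 0 ∧ ∀ x ≥ (0:ℝ), 0 ≤ h x

/-- The `δ`-premeasure `H^h_δ` on `ℝ` associated with a dimension function `h`. -/
noncomputable def preH (h : ℝ → ℝ) (δ : ℝ) (E : Set ℝ) : ENNReal :=
  ⨅ (t : ℕ → Set ℝ) (_ : E ⊆ ⋃ i, t i)
    (_ : ∀ i, EMetric.diam (t i) < ENNReal.ofReal δ),
    ∑' i, ENNReal.ofReal (h (EMetric.diam (t i)).toReal)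

/-- The generalized inverse `𝔥⁻¹ y = inf { x > 0 : 𝔥 x ≥ y }`. -/
noncomputable def dimInv (𝔥 : ℝ → ℝ) (y : ℝ) : ℝ := sInf {x : ℝ | 0 < x ∧ y ≤ 𝔥 x}

section Aux

variable {𝔥 : ℝ → ℝ} {δ : ℝ}

/-- Gauge whose Method-I outer measure coincides with `preH`. -/
noncomputable def mGauge (𝔥 : ℝ → ℝ) (δ : ℝ) (U : Set ℝ) : ENNReal :=
  if EMetric.diam U < ENNReal.ofReal δ then ENNReal.ofReal (𝔥 (EMetric.diam U).toReal) else ⊤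

lemma mGauge_empty (hδ : 0 < δ) (h0 : 𝔥 0 = 0) : mGauge 𝔥 δ ∅ = 0 := by
  simp [mGauge, EMetric.diam, ENNReal.ofReal_pos.2 hδ, h0]

lemma preH_eq_ofFunction (hδ : 0 < δ) (h0 : 𝔥 0 = 0) (E : Set ℝ) :
    preH 𝔥 δ E = OuterMeasure.ofFunction (mGauge 𝔥 δ) (mGauge_empty hδ h0) E := by
  rw [OuterMeasure.ofFunction_apply]
  apply le_antisymm
  · refine le_iInf fun t => le_iInf fun hcov => ?_
    by_cases hall : ∀ i, EMetric.diam (t i) < ENNReal.ofReal δ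
    · refine le_trans (iInf_le_of_le t (iInf_le_of_le hcov (iInf_le _ hall))) (le_of_eq ?_)
      exact tsum_congr fun i => by rw [mGauge, if_pos (hall i)]
    · push_neg at hall
      obtain ⟨i, hi⟩ := hall
      have htop : mGauge 𝔥 δ (t i) = ⊤ := if_neg (not_lt.2 hi)
      exact le_top.trans (htop ▸ ENNReal.le_tsum i)
  · refine le_iInf fun t => le_iInf fun hcov => le_iInf fun hdiam => ?_
    refine le_trans (iInf_le_of_le t (iInf_le _ hcov)) (le_of_eq ?_)
    exact tsum_congr fun i => by rw [mGauge, if_pos (hdiam i)]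

lemma preH_mono (hδ : 0 < δ) (h0 : 𝔥 0 = 0) {A B : Set ℝ} (hAB : A ⊆ B) :
    preH 𝔥 δ A ≤ preH 𝔥 δ B := by
  rw [preH_eq_ofFunction hδ h0, preH_eq_ofFunction hδ h0]
  exact measure_mono hAB

lemma preH_iUnion_le (hδ : 0 < δ) (h0 : 𝔥 0 = 0) {ι : Type*} [Countable ι] (s : ι → Set ℝ) :
    preH 𝔥 δ (⋃ i, s i) ≤ ∑' i, preH 𝔥 δ (s i) := by
  simp only [preH_eq_ofFunction hδ h0]
  exact measure_iUnion_le s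

lemma preH_union_le (hδ : 0 < δ) (h0 : 𝔥 0 = 0) (A B : Set ℝ) :
    preH 𝔥 δ (A ∪ B) ≤ preH 𝔥 δ A + preH 𝔥 δ B := by
  simp only [preH_eq_ofFunction hδ h0]
  exact measure_union_le A B

lemma preH_le_gauge (hδ : 0 < δ) (h0 : 𝔥 0 = 0) (hmono : MonotoneOn 𝔥 (Ici 0))
    {S : Set ℝ} {d : ℝ} (hd : 0 ≤ d) (hdδ : d < δ)
    (hSd : EMetric.diam S ≤ ENNReal.ofReal d) :
    preH 𝔥 δ S ≤ ENNReal.ofReal (𝔥 d) := by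
  rw [preH_eq_ofFunction hδ h0]
  refine le_trans (OuterMeasure.ofFunction_le S) ?_
  rw [mGauge, if_pos (lt_of_le_of_lt hSd ((ENNReal.ofReal_lt_ofReal_iff_of_nonneg hd).2 hdδ))]
  exact ENNReal.ofReal_le_ofReal
    (hmono (mem_Ici.2 ENNReal.toReal_nonneg) (mem_Ici.2 hd)
      (ENNReal.toReal_le_of_le_ofReal hd hSd))

lemma preH_superadd (hδ : 0 < δ) (h0 : 𝔥 0 = 0) {A B : Set ℝ}
    (hsep : ∀ a ∈ A, ∀ b ∈ B, δ ≤ |a - b|) :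
    preH 𝔥 δ A + preH 𝔥 δ B ≤ preH 𝔥 δ (A ∪ B) := by
  classical
  refine le_iInf fun t => le_iInf fun hcov => le_iInf fun hdiam => ?_
  set t1 : ℕ → Set ℝ := fun i => if (t i ∩ A).Nonempty then t i else ∅ with ht1
  set t2 : ℕ → Set ℝ := fun i => if (t i ∩ B).Nonempty then t i else ∅ with ht2
  have hcov1 : A ⊆ ⋃ i, t1 i := by
    intro x hx
    obtain ⟨i, hi⟩ := mem_iUnion.1 (hcov (Or.inl hx))
    refine mem_iUnion.2 ⟨i, ?_⟩
    rw [ht1]; dsimp only; rw [if_pos ⟨x, hi, hx⟩]; exact hi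
  have hcov2 : B ⊆ ⋃ i, t2 i := by
    intro x hx
    obtain ⟨i, hi⟩ := mem_iUnion.1 (hcov (Or.inr hx))
    refine mem_iUnion.2 ⟨i, ?_⟩
    rw [ht2]; dsimp only; rw [if_pos ⟨x, hi, hx⟩]; exact hi
  have hd1 : ∀ i, EMetric.diam (t1 i) < ENNReal.ofReal δ := by
    intro i; rw [ht1]; dsimp only
    split
    · exact hdiam i
    · simpa [EMetric.diam] using ENNReal.ofReal_pos.2 hδ
  have hd2 : ∀ i, EMetric.diam (t2 i) < ENNReal.ofReal δ := by
    intro i; rw [ht2]; dsimp only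
    split
    · exact hdiam i
    · simpa [EMetric.diam] using ENNReal.ofReal_pos.2 hδ
  have key : ∀ i,
      ENNReal.ofReal (𝔥 (EMetric.diam (t1 i)).toReal)
        + ENNReal.ofReal (𝔥 (EMetric.diam (t2 i)).toReal)
      ≤ ENNReal.ofReal (𝔥 (EMetric.diam (t i)).toReal) := by
    intro i
    by_cases h1 : (t i ∩ A).Nonempty <;> by_cases h2 : (t i ∩ B).Nonempty
    · exfalso
      obtain ⟨a, haT, haA⟩ := h1
      obtain ⟨b, hbT, hbB⟩ := h2
      have h1' : edist a b ≤ EMetric.diam (t i) := EMetric.edist_le_diam_of_mem haT hbT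
      have h2' : ENNReal.ofReal δ ≤ edist a b := by
        rw [edist_dist, Real.dist_eq]
        exact ENNReal.ofReal_le_ofReal (hsep a haA b hbB)
      exact lt_irrefl _ (lt_of_le_of_lt (h2'.trans h1') (hdiam i))
    · simp only [ht1, ht2, if_pos h1, if_neg h2, EMetric.diam, EMetric.diam_empty, ENNReal.toReal_zero, h0,
        ENNReal.ofReal_zero, add_zero, le_refl]
    · simp only [ht1, ht2, if_neg h1, if_pos h2, EMetric.diam, EMetric.diam_empty, ENNReal.toReal_zero, h0,
        ENNReal.ofReal_zero, zero_add, le_refl]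
    · simp only [ht1, ht2, if_neg h1, if_neg h2, EMetric.diam, EMetric.diam_empty, ENNReal.toReal_zero, h0,
        ENNReal.ofReal_zero, add_zero]
      exact zero_le
  calc preH 𝔥 δ A + preH 𝔥 δ B
      ≤ (∑' i, ENNReal.ofReal (𝔥 (EMetric.diam (t1 i)).toReal))
        + ∑' i, ENNReal.ofReal (𝔥 (EMetric.diam (t2 i)).toReal) :=
        add_le_add (iInf_le_of_le t1 (iInf_le_of_le hcov1 (iInf_le _ hd1)))
          (iInf_le_of_le t2 (iInf_le_of_le hcov2 (iInf_le _ hd2)))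
    _ = ∑' i, (ENNReal.ofReal (𝔥 (EMetric.diam (t1 i)).toReal)
        + ENNReal.ofReal (𝔥 (EMetric.diam (t2 i)).toReal)) := ENNReal.tsum_add.symm
    _ ≤ ∑' i, ENNReal.ofReal (𝔥 (EMetric.diam (t i)).toReal) := ENNReal.tsum_le_tsum key

end Aux

section Aux2

variable {𝔥 : ℝ → ℝ} {δ : ℝ}

lemma class_superadd (hδ : 0 < δ) (h0 : 𝔥 0 = 0) (A : ℤ → Set ℝ)
    (hA : ∀ k : ℤ, A k ⊆ Icc ((k:ℝ) * (δ/2)) ((k:ℝ) * (δ/2) + δ/2)) :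
    ∀ F : Finset ℤ, (∀ a ∈ F, ∀ b ∈ F, a ≠ b → (3:ℤ) ≤ |a - b|) →
      ∑ k ∈ F, preH 𝔥 δ (A k) ≤ preH 𝔥 δ (⋃ k ∈ F, A k) := by
  intro F
  induction F using Finset.induction_on_max with
  | empty => intro _; simp
  | insert a s hlt ih =>
    intro hsep
    have hsep' : ∀ x ∈ s, ∀ y ∈ s, x ≠ y → (3:ℤ) ≤ |x - y| := fun x hx y hy =>
      hsep x (Finset.mem_insert_of_mem hx) y (Finset.mem_insert_of_mem hy)
    have has : a ∉ s := fun h => lt_irrefl a (hlt a h)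
    rw [Finset.sum_insert has, Finset.set_biUnion_insert]
    refine le_trans (add_le_add_right (ih hsep') _) (preH_superadd hδ h0 ?_)
    intro p hp q hq
    obtain ⟨k, hk, hqk⟩ := mem_iUnion₂.1 hq
    have hka : k ≤ a - 3 := by
      have h1 := hlt k hk
      have h2 := hsep a (Finset.mem_insert_self _ _) k (Finset.mem_insert_of_mem hk)
        (by omega)
      rw [abs_of_pos (by omega : (0:ℤ) < a - k)] at h2
      omega
    have hw : (0:ℝ) < δ/2 := by linarith
    have hp1 : (a:ℝ) * (δ/2) ≤ p := (hA a hp).1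
    have hq1 : q ≤ (k:ℝ) * (δ/2) + δ/2 := (hA k hqk).2
    have hcast : (k:ℝ) ≤ (a:ℝ) - 3 := by exact_mod_cast hka
    have hmul : (k:ℝ) * (δ/2) ≤ ((a:ℝ) - 3) * (δ/2) :=
      mul_le_mul_of_nonneg_right hcast hw.le
    have hpq : δ ≤ p - q := by nlinarith
    exact hpq.trans (le_abs_self _)

lemma monster (hδ : 0 < δ) (h0 : 𝔥 0 = 0) {E : Set ℝ} {η : ℝ} (hη : 0 < η)
    (hE : ENNReal.ofReal η ≤ preH 𝔥 δ E)
    (hb : (∀ m : ℝ, preH 𝔥 δ (E ∩ Iic m) ≤ ENNReal.ofReal (η/4)) ∨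
          (∀ m : ℝ, preH 𝔥 δ (E ∩ Ici m) ≤ ENNReal.ofReal (η/4))) : False := by
  classical
  have hw : (0:ℝ) < δ/2 := by linarith
  set A : ℤ → Set ℝ := fun k => E ∩ Icc ((k:ℝ)*(δ/2)) ((k:ℝ)*(δ/2) + δ/2) with hAdef
  have hAsub : ∀ k : ℤ, A k ⊆ Icc ((k:ℝ)*(δ/2)) ((k:ℝ)*(δ/2) + δ/2) :=
    fun k => inter_subset_right
  have hcov : E ⊆ ⋃ k : ℤ, A k := by
    intro x hx
    refine mem_iUnion.2 ⟨⌊x / (δ/2)⌋, hx, ?_, ?_⟩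
    · rw [← le_div_iff₀ hw]
      exact Int.floor_le _
    · have h2 := Int.lt_floor_add_one (x / (δ/2))
      rw [div_lt_iff₀ hw] at h2
      nlinarith
  have h1 : ENNReal.ofReal η ≤ ∑' k : ℤ, preH 𝔥 δ (A k) :=
    hE.trans ((preH_mono hδ h0 hcov).trans (preH_iUnion_le hδ h0 A))
  have hclassbound : ∀ F : Finset ℤ, (∀ a ∈ F, ∀ b ∈ F, a ≠ b → (3:ℤ) ≤ |a - b|) →
      ∑ k ∈ F, preH 𝔥 δ (A k) ≤ ENNReal.ofReal (η/4) := by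
    intro F hsepF
    rcases F.eq_empty_or_nonempty with rfl | hne
    · simp
    refine (class_superadd hδ h0 A hAsub F hsepF).trans ?_
    rcases hb with hb | hb
    · refine (preH_mono hδ h0 ?_).trans (hb ((F.max' hne : ℝ) * (δ/2) + δ/2))
      intro x hx
      obtain ⟨k, hk, hxk⟩ := mem_iUnion₂.1 hx
      refine ⟨hxk.1, ?_⟩
      have h2 := hxk.2.2
      have h3 : ((k:ℝ)) * (δ/2) ≤ (F.max' hne : ℝ) * (δ/2) :=
        mul_le_mul_of_nonneg_right (by exact_mod_cast F.le_max' k hk) hw.le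
      simp only [mem_Iic]; linarith
    · refine (preH_mono hδ h0 ?_).trans (hb ((F.min' hne : ℝ) * (δ/2)))
      intro x hx
      obtain ⟨k, hk, hxk⟩ := mem_iUnion₂.1 hx
      refine ⟨hxk.1, ?_⟩
      have h2 := hxk.2.1
      have h3 : ((F.min' hne : ℝ)) * (δ/2) ≤ (k:ℝ) * (δ/2) :=
        mul_le_mul_of_nonneg_right (by exact_mod_cast F.min'_le k hk) hw.le
      simp only [mem_Ici]; linarith
  have hdvd_sep : ∀ (a b : ℤ), a ≠ b → (3:ℤ) ∣ (a - b) → (3:ℤ) ≤ |a - b| := by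
    intro a b hab hdvd
    exact Int.le_of_dvd (abs_pos.2 (sub_ne_zero.2 hab)) ((dvd_abs _ _).2 hdvd)
  have hFall : ∀ F : Finset ℤ, ∑ k ∈ F, preH 𝔥 δ (A k) ≤ 3 * ENNReal.ofReal (η/4) := by
    intro F
    have e1 := Finset.sum_filter_add_sum_filter_not F (fun k => k % 3 = 0)
      (fun k => preH 𝔥 δ (A k))
    have e2 := Finset.sum_filter_add_sum_filter_not (F.filter (fun k => ¬ k % 3 = 0))
      (fun k => k % 3 = 1) (fun k => preH 𝔥 δ (A k))
    have b0 : ∑ k ∈ F.filter (fun k => k % 3 = 0), preH 𝔥 δ (A k) ≤ ENNReal.ofReal (η/4) := by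
      refine hclassbound _ fun a ha b hb hab => hdvd_sep a b hab ?_
      have h1 := (Finset.mem_filter.1 ha).2
      have h2 := (Finset.mem_filter.1 hb).2
      omega
    have b1 : ∑ k ∈ (F.filter (fun k => ¬ k % 3 = 0)).filter (fun k => k % 3 = 1),
        preH 𝔥 δ (A k) ≤ ENNReal.ofReal (η/4) := by
      refine hclassbound _ fun a ha b hb hab => hdvd_sep a b hab ?_
      have h1 := (Finset.mem_filter.1 ha).2
      have h2 := (Finset.mem_filter.1 hb).2
      omega
    have b2 : ∑ k ∈ (F.filter (fun k => ¬ k % 3 = 0)).filter (fun k => ¬ k % 3 = 1),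
        preH 𝔥 δ (A k) ≤ ENNReal.ofReal (η/4) := by
      refine hclassbound _ fun a ha b hb hab => hdvd_sep a b hab ?_
      have h1a := (Finset.mem_filter.1 ha).2
      have h1b := (Finset.mem_filter.1 (Finset.filter_subset _ _ ha : a ∈ F.filter _)).2
      have h2a := (Finset.mem_filter.1 hb).2
      have h2b := (Finset.mem_filter.1 (Finset.filter_subset _ _ hb : b ∈ F.filter _)).2
      omega
    calc ∑ k ∈ F, preH 𝔥 δ (A k)
        = _ + (_ + _) := by rw [e2, e1]
      _ ≤ ENNReal.ofReal (η/4) + (ENNReal.ofReal (η/4) + ENNReal.ofReal (η/4)) :=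
          add_le_add b0 (add_le_add b1 b2)
      _ = 3 * ENNReal.ofReal (η/4) := by ring
  have h2 : ∑' k : ℤ, preH 𝔥 δ (A k) ≤ 3 * ENNReal.ofReal (η/4) := by
    rw [ENNReal.tsum_eq_iSup_sum]
    exact iSup_le hFall
  have h3 : ENNReal.ofReal η ≤ ENNReal.ofReal (3 * (η/4)) := by
    refine h1.trans (h2.trans (le_of_eq ?_))
    rw [ENNReal.ofReal_mul (by norm_num : (0:ℝ) ≤ 3)]
    norm_num
  rw [ENNReal.ofReal_le_ofReal_iff (by linarith)] at h3
  linarith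

end Aux2

theorem stmt18 :
    ∃ c : ℝ, 0 < c ∧
      ∀ 𝔥 : ℝ → ℝ, IsDimFun 𝔥 → ∀ δ : ℝ, 0 < δ →
        ∀ I : Set ℝ, I.OrdConnected → ∀ E : Set ℝ, E ⊆ I → ∀ η : ℝ, 0 < η →
          dimInv 𝔥 (η / 8) < δ → ENNReal.ofReal η ≤ preH 𝔥 δ E →
          ∃ Im Ip : Set ℝ, Im.OrdConnected ∧ Ip.OrdConnected ∧ Im ⊆ I ∧ Ip ⊆ I ∧
            (∀ x ∈ Im, ∀ y ∈ Ip, dimInv 𝔥 (η / 8) ≤ |x - y|) ∧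
            ENNReal.ofReal (c * η) ≤ preH 𝔥 δ (Im ∩ E) ∧
            ENNReal.ofReal (c * η) ≤ preH 𝔥 δ (Ip ∩ E) := by
  refine ⟨1/4, by norm_num, ?_⟩
  intro 𝔥 h𝔥 δ hδ I hI E hEI η hη hrδ hηE
  obtain ⟨hmono, hcont, h0, hnn⟩ := h𝔥
  have hc : (1/4 : ℝ) * η = η/4 := by ring
  rcases le_or_gt (dimInv 𝔥 (η / 8)) 0 with hr0 | hr0
  · refine ⟨I, I, hI, hI, Subset.rfl, Subset.rfl,
      fun x _ y _ => hr0.trans (abs_nonneg _), ?_, ?_⟩ <;>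
    · rw [inter_eq_self_of_subset_right hEI]
      exact le_trans (ENNReal.ofReal_le_ofReal (by linarith)) hηE
  · set r := dimInv 𝔥 (η / 8) with hrdef
    have hsmall : ∀ x : ℝ, 0 < x → x < r → 𝔥 x < η/8 := by
      intro x hx hxr
      by_contra hcon
      push_neg at hcon
      have : r ≤ x := csInf_le ⟨0, fun y hy => hy.1.le⟩ ⟨hx, by linarith⟩
      linarith
    have h𝔥r : 𝔥 r ≤ η/8 := by
      by_contra hcon
      push_neg at hcon
      have hev : ∀ᶠ x in nhdsWithin r (Ici 0), η/8 < 𝔥 x :=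
        (hcont r (mem_Ici.2 hr0.le)).eventually (eventually_gt_nhds hcon)
      rw [Filter.eventually_iff, Metric.mem_nhdsWithin_iff] at hev
      obtain ⟨ζ, hζ, hsub⟩ := hev
      set x := max (r/2) (r - ζ/2) with hx
      have hx0 : 0 < x := lt_of_lt_of_le (by linarith) (le_max_left _ _)
      have hxr : x < r := max_lt (by linarith) (by linarith)
      have hxball : x ∈ Metric.ball r ζ ∩ Ici 0 := by
        constructor
        · rw [Metric.mem_ball, Real.dist_eq, abs_of_nonpos (by linarith)]
          have : r - ζ/2 ≤ x := le_max_right _ _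
          linarith
        · exact mem_Ici.2 hx0.le
      exact absurd (hsub hxball) (not_lt.2 (hsmall x hx0 hxr).le)
    obtain ⟨ζ, hζ, hsub⟩ : ∃ ζ > 0, Metric.ball r ζ ∩ Ici 0 ⊆ {x | 𝔥 x < 𝔥 r + η/16} := by
      have hev : ∀ᶠ x in nhdsWithin r (Ici 0), 𝔥 x < 𝔥 r + η/16 :=
        (hcont r (mem_Ici.2 hr0.le)).eventually (eventually_lt_nhds (by linarith))
      rw [Filter.eventually_iff, Metric.mem_nhdsWithin_iff] at hev
      exact hev
    set ε := min (ζ/4) ((δ - r)/4) with hεdef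
    have hε : 0 < ε := lt_min (by linarith) (by linarith)
    have hε1 : ε ≤ ζ/4 := min_le_left _ _
    have hε2 : ε ≤ (δ - r)/4 := min_le_right _ _
    have hεδ : r + 2*ε < δ := by linarith
    have hε𝔥 : 𝔥 (r + 2*ε) < η/8 + η/16 := by
      have hmem : r + 2*ε ∈ Metric.ball r ζ ∩ Ici 0 := by
        constructor
        · rw [Metric.mem_ball, Real.dist_eq, abs_of_nonneg (by linarith)]
          linarith
        · exact mem_Ici.2 (by linarith)
      have := hsub hmem
      simp only [mem_setOf_eq] at this
      linarith
    by_cases hex : ∃ m : ℝ, ENNReal.ofReal (η/4) ≤ preH 𝔥 δ (E ∩ Iic m) ∧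
        ENNReal.ofReal (η/4) ≤ preH 𝔥 δ (E ∩ Ici (m + r))
    · obtain ⟨m, hL, hR⟩ := hex
      refine ⟨I ∩ Iic m, I ∩ Ici (m + r), hI.inter ordConnected_Iic,
        hI.inter ordConnected_Ici, inter_subset_left, inter_subset_left, ?_, ?_, ?_⟩
      · intro x hx y hy
        have hx2 : x ≤ m := hx.2
        have hy2 : m + r ≤ y := hy.2
        rw [abs_sub_comm]
        calc r ≤ y - x := by linarith
          _ ≤ |y - x| := le_abs_self _
      · have hset : (I ∩ Iic m) ∩ E = E ∩ Iic m := by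
          apply Subset.antisymm
          · rintro x ⟨⟨_, hxm⟩, hxE⟩; exact ⟨hxE, hxm⟩
          · rintro x ⟨hxE, hxm⟩; exact ⟨⟨hEI hxE, hxm⟩, hxE⟩
        rw [hset, hc]
        exact hL
      · have hset : (I ∩ Ici (m + r)) ∩ E = E ∩ Ici (m + r) := by
          apply Subset.antisymm
          · rintro x ⟨⟨_, hxm⟩, hxE⟩; exact ⟨hxE, hxm⟩
          · rintro x ⟨hxE, hxm⟩; exact ⟨⟨hEI hxE, hxm⟩, hxE⟩
        rw [hset, hc]
        exact hR
    · exfalso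
      push_neg at hex
      by_cases hSL : ∀ m : ℝ, preH 𝔥 δ (E ∩ Iic m) < ENNReal.ofReal (η/4)
      · exact monster hδ h0 hη hηE (Or.inl fun m => (hSL m).le)
      push_neg at hSL
      obtain ⟨m₀, hm₀⟩ := hSL
      by_cases hSR : ∀ m : ℝ, preH 𝔥 δ (E ∩ Ici m) < ENNReal.ofReal (η/4)
      · exact monster hδ h0 hη hηE (Or.inr fun m => (hSR m).le)
      push_neg at hSR
      obtain ⟨m₁, hm₁⟩ := hSR
      set T : Set ℝ := {m | ENNReal.ofReal (η/4) ≤ preH 𝔥 δ (E ∩ Iic m)} with hTdef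
      have hTne : T.Nonempty := ⟨m₀, hm₀⟩
      have hTbdd : BddBelow T := by
        refine ⟨m₁ - r, fun m hm => ?_⟩
        by_contra hcon
        push_neg at hcon
        have h4 := hex m hm
        have h5 : preH 𝔥 δ (E ∩ Ici m₁) ≤ preH 𝔥 δ (E ∩ Ici (m + r)) :=
          preH_mono hδ h0 (inter_subset_inter_right _ (Ici_subset_Ici.2 (by linarith)))
        exact absurd hm₁ (not_le.2 (lt_of_le_of_lt h5 h4))
      set u := sInf T with hu
      have hnotin : u - ε ∉ T := by
        intro hmem
        have := csInf_le hTbdd hmem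
        rw [← hu] at this
        linarith
      have hGa : preH 𝔥 δ (E ∩ Iic (u - ε)) < ENNReal.ofReal (η/4) := not_le.1 hnotin
      obtain ⟨m, hmT, hmlt⟩ : ∃ m ∈ T, m < u + ε :=
        (csInf_lt_iff hTbdd hTne).1 (by linarith)
      have hum : u ≤ m := csInf_le hTbdd hmT
      have hGb : preH 𝔥 δ (E ∩ Ici (m + r)) < ENNReal.ofReal (η/4) := hex m hmT
      have hab : u - ε ≤ m + r := by linarith
      have hcover : E ⊆ (E ∩ Iic (u - ε)) ∪ ((E ∩ Icc (u - ε) (m + r)) ∪ (E ∩ Ici (m + r))) := by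
        intro x hx
        rcases le_total x (u - ε) with h | h
        · exact Or.inl ⟨hx, h⟩
        rcases le_total x (m + r) with h' | h'
        · exact Or.inr (Or.inl ⟨hx, h, h'⟩)
        · exact Or.inr (Or.inr ⟨hx, h'⟩)
      have hmid : preH 𝔥 δ (E ∩ Icc (u - ε) (m + r)) ≤ ENNReal.ofReal (𝔥 (r + 2*ε)) := by
        refine preH_le_gauge hδ h0 hmono (by linarith) hεδ ?_
        refine le_trans (EMetric.diam_mono inter_subset_right) ?_
        rw [Real.ediam_Icc]
        exact ENNReal.ofReal_le_ofReal (by linarith)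
      have h𝔥nn : 0 ≤ 𝔥 (r + 2*ε) := hnn _ (by linarith)
      have htot : ENNReal.ofReal η ≤
          ENNReal.ofReal (η/4) + (ENNReal.ofReal (𝔥 (r + 2*ε)) + ENNReal.ofReal (η/4)) := by
        refine hηE.trans ((preH_mono hδ h0 hcover).trans ?_)
        refine (preH_union_le hδ h0 _ _).trans ?_
        exact add_le_add hGa.le
          ((preH_union_le hδ h0 _ _).trans (add_le_add hmid hGb.le))
      rw [← ENNReal.ofReal_add h𝔥nn (by linarith), ← ENNReal.ofReal_add (by linarith)
        (by linarith), ENNReal.ofReal_le_ofReal_iff (by linarith)] at htot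
      linarith
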